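/- Lemma 5.2: the function u ↦ g(u,π) is positive on [0,1), i.e. g(u,π) > 0 for every u ∈ [0,1). -/

import Mathlib

/-- The function `g(u,β)` whose roots `u ∈ (0,1)` determine the spectral singularities of the
PT-symmetric waveguide with gain-and-loss amplitude `γ = β²/2`. (Note that for `u = 0` the
formula evaluates to `1`, the limit value as `u → 0⁺`, since in Lean `β/0 = 0`.) -/
noncomputable def g (u β : ℝ) : ℝ :=
  u^4 * (1 - u^4) * Real.cosh (β * u) * Real.cos (β / u)
    - 2 * u^6 * Real.sinh (β * u) * Real.sin (β / u) + 1 - u^12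

lemma exp_taylor_ub {q : ℝ} (h0 : 0 ≤ q) (h1 : q ≤ 1) :
    Real.exp q ≤ 1+q+q^2/2+q^3/6+q^4/24+q^5/120+q^6/720+q^7/4410 := by
  have h := Real.exp_bound (x := q) (by rw [abs_of_nonneg h0]; exact h1) (n := 7) (by norm_num)
  rw [abs_of_nonneg h0] at h
  have h2 := (abs_le.1 h).2
  have hs : ∑ m ∈ Finset.range 7, q ^ m / (Nat.factorial m)
      = 1+q+q^2/2+q^3/6+q^4/24+q^5/120+q^6/720 := by
    simp [Finset.sum_range_succ, Nat.factorial]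
  rw [hs] at h2
  norm_num [Nat.factorial] at h2
  linarith

lemma exp_taylor_lb {q : ℝ} (h0 : 0 ≤ q) (h1 : q ≤ 1) :
    1+q+q^2/2+q^3/6+q^4/24+q^5/120+q^6/720-q^7/4410 ≤ Real.exp q := by
  have h := Real.exp_bound (x := q) (by rw [abs_of_nonneg h0]; exact h1) (n := 7) (by norm_num)
  rw [abs_of_nonneg h0] at h
  have h2 := (abs_le.1 h).1
  have hs : ∑ m ∈ Finset.range 7, q ^ m / (Nat.factorial m)
      = 1+q+q^2/2+q^3/6+q^4/24+q^5/120+q^6/720 := by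
    simp [Finset.sum_range_succ, Nat.factorial]
  rw [hs] at h2
  norm_num [Nat.factorial] at h2
  linarith

lemma exp_ub {x q E : ℝ} (h0 : 0 ≤ q) (h1 : q ≤ 1) (hx : x ≤ 4*q)
    (hE : (1+q+q^2/2+q^3/6+q^4/24+q^5/120+q^6/720+q^7/4410)^4 ≤ E) :
    Real.exp x ≤ E := by
  have ht := exp_taylor_ub h0 h1
  have hmono : Real.exp x ≤ Real.exp (4*q) := Real.exp_le_exp.2 hx
  have h4 : Real.exp (4*q) = (Real.exp q)^4 := by
    rw [show (4:ℝ)*q = ((4:ℕ):ℝ)*q by norm_num, Real.exp_nat_mul]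
  have hpow : (Real.exp q)^4 ≤ (1+q+q^2/2+q^3/6+q^4/24+q^5/120+q^6/720+q^7/4410)^4 :=
    pow_le_pow_left₀ (Real.exp_pos q).le ht 4
  linarith [hmono, h4 ▸ hmono]

lemma exp_lb {x q Fv : ℝ} (h0 : 0 ≤ q) (h1 : q ≤ 1) (hx : 4*q ≤ x)
    (hF : Fv ≤ (1+q+q^2/2+q^3/6+q^4/24+q^5/120+q^6/720-q^7/4410)^4) :
    Fv ≤ Real.exp x := by
  have ht := exp_taylor_lb h0 h1
  have hmono : Real.exp (4*q) ≤ Real.exp x := Real.exp_le_exp.2 hx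
  have h4 : Real.exp (4*q) = (Real.exp q)^4 := by
    rw [show (4:ℝ)*q = ((4:ℕ):ℝ)*q by norm_num, Real.exp_nat_mul]
  have hq7 : q^7 ≤ 1 := pow_le_one₀ h0 h1
  have hTnn : (0:ℝ) ≤ 1+q+q^2/2+q^3/6+q^4/24+q^5/120+q^6/720-q^7/4410 := by
    nlinarith [pow_nonneg h0 2, pow_nonneg h0 3, pow_nonneg h0 4, pow_nonneg h0 5,
      pow_nonneg h0 6]
  have hpow : (1+q+q^2/2+q^3/6+q^4/24+q^5/120+q^6/720-q^7/4410)^4 ≤ (Real.exp q)^4 :=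
    pow_le_pow_left₀ hTnn ht 4
  linarith [h4 ▸ hmono]

lemma cosh_ub {x E Fv Ch : ℝ} (hE : Real.exp x ≤ E) (hF0 : 0 < Fv)
    (hF : Fv ≤ Real.exp x) (hCh : (E + 1/Fv)/2 ≤ Ch) : Real.cosh x ≤ Ch := by
  rw [Real.cosh_eq]
  have h1 : Real.exp (-x) = 1 / Real.exp x := by
    rw [Real.exp_neg]; exact (one_div _).symm
  have h2 : 1/Real.exp x ≤ 1/Fv := one_div_le_one_div_of_le hF0 hF
  rw [h1]
  linarith

lemma sinh_lb {x Fv Sh : ℝ} (hF0 : 0 < Fv) (hF : Fv ≤ Real.exp x)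
    (hSh : Sh ≤ (Fv - 1/Fv)/2) : Sh ≤ Real.sinh x := by
  rw [Real.sinh_eq]
  have h1 : Real.exp (-x) = 1 / Real.exp x := by
    rw [Real.exp_neg]; exact (one_div _).symm
  have h2 : 1/Real.exp x ≤ 1/Fv := one_div_le_one_div_of_le hF0 hF
  rw [h1]
  linarith

set_option maxHeartbeats 1000000

lemma cosh_mono_aux {x y : ℝ} (hx : 0 ≤ x) (hy : 0 ≤ y) (hxy : x ≤ y) :
    Real.cosh x ≤ Real.cosh y := by
  rw [Real.cosh_le_cosh, abs_of_nonneg hx, abs_of_nonneg hy]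
  exact hxy

lemma caseA (C : ℝ) (hC0 : 1 ≤ C) (hC : Real.cosh (Real.pi*(1/2)) ≤ C)
    (hK : (1/2:ℝ)^4*C + 2*(1/2)^6*C + (1/2)^12 < 1)
    (u : ℝ) (hu0 : 0 ≤ u) (hu2 : u ≤ 1/2) : 0 < g u Real.pi := by
  have hpi : (0:ℝ) < Real.pi := Real.pi_pos
  have hpiu0 : (0:ℝ) ≤ Real.pi*u := mul_nonneg hpi.le hu0
  have hcos1 := Real.neg_one_le_cos (Real.pi/u)
  have hsin1 := Real.neg_one_le_sin (Real.pi/u)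
  have hsin2 := Real.sin_le_one (Real.pi/u)
  have hchu : Real.cosh (Real.pi*u) ≤ C := by
    refine le_trans (cosh_mono_aux hpiu0 (by positivity) (by nlinarith)) hC
  have hch1 : (1:ℝ) ≤ Real.cosh (Real.pi*u) := Real.one_le_cosh _
  have hsh0 : 0 ≤ Real.sinh (Real.pi*u) := by
    rw [Real.sinh_nonneg_iff]; exact hpiu0
  have hshu : Real.sinh (Real.pi*u) ≤ C :=
    le_trans (Real.sinh_lt_cosh (Real.pi*u)).le hchu
  have hu4 : u^4 ≤ (1/2:ℝ)^4 := pow_le_pow_left₀ hu0 hu2 4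
  have hu6 : u^6 ≤ (1/2:ℝ)^6 := pow_le_pow_left₀ hu0 hu2 6
  have hu12 : u^12 ≤ (1/2:ℝ)^12 := pow_le_pow_left₀ hu0 hu2 12
  have hu40 : 0 ≤ u^4 := by positivity
  have hu60 : 0 ≤ u^6 := by positivity
  have hu41 : u^4 ≤ 1 := by nlinarith
  have hXnn : 0 ≤ u^4*(1-u^4)*Real.cosh (Real.pi*u) := by
    apply mul_nonneg (mul_nonneg hu40 (by linarith)) (by linarith)
  have hXle : u^4*(1-u^4)*Real.cosh (Real.pi*u) ≤ (1/2:ℝ)^4*C := by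
    nlinarith [mul_le_mul hu4 hchu (by linarith) (by norm_num : (0:ℝ) ≤ (1/2:ℝ)^4),
      mul_nonneg (mul_nonneg hu40 hu40) (by linarith : (0:ℝ) ≤ Real.cosh (Real.pi*u))]
  have h1 : u^4*(1-u^4)*Real.cosh (Real.pi*u) * Real.cos (Real.pi/u) ≥ -((1/2:ℝ)^4*C) := by
    nlinarith [mul_nonneg hXnn (by linarith : (0:ℝ) ≤ 1 + Real.cos (Real.pi/u))]
  have hYnn : 0 ≤ 2*u^6*Real.sinh (Real.pi*u) :=
    mul_nonneg (by positivity) hsh0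
  have hYle : 2*u^6*Real.sinh (Real.pi*u) ≤ 2*(1/2:ℝ)^6*C := by
    nlinarith [mul_le_mul hu6 hshu hsh0 (by norm_num : (0:ℝ) ≤ (1/2:ℝ)^6)]
  have h2 : 2*u^6*Real.sinh (Real.pi*u) * Real.sin (Real.pi/u) ≤ 2*(1/2:ℝ)^6*C := by
    nlinarith [mul_nonneg hYnn (by linarith : (0:ℝ) ≤ 1 - Real.sin (Real.pi/u))]
  unfold g
  linarith

lemma caseB (a b K : ℝ) (ha : 1/2 ≤ a) (hab : a ≤ b) (hb : b ≤ 7/10)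
    (hK0 : 0 ≤ K) (hKc : Real.cosh (Real.pi*b) ≤ K) (hK2 : b^4*K < 1 + a^4 + a^8)
    (u : ℝ) (hu1 : a ≤ u) (hu2 : u ≤ b) : 0 < g u Real.pi := by
  have hpi : (0:ℝ) < Real.pi := Real.pi_pos
  have hu0 : (0:ℝ) < u := by linarith
  have hpiu : Real.pi ≤ Real.pi/u := by
    rw [le_div_iff₀ hu0]
    nlinarith [mul_nonneg hpi.le (by linarith : (0:ℝ) ≤ 1 - u)]
  have h2pi : Real.pi/u ≤ 2*Real.pi := by
    rw [div_le_iff₀ hu0]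
    nlinarith [mul_nonneg hpi.le (by linarith : (0:ℝ) ≤ 2*u - 1)]
  have hsinle : Real.sin (Real.pi/u) ≤ 0 := by
    have hs := Real.sin_nonneg_of_nonneg_of_le_pi (x := Real.pi/u - Real.pi)
      (by linarith) (by linarith)
    have heq : Real.sin (Real.pi/u) = -Real.sin (Real.pi/u - Real.pi) := by
      rw [show Real.pi/u = (Real.pi/u - Real.pi) + Real.pi by ring, Real.sin_add]
      simp
    linarith
  have hcos1 := Real.neg_one_le_cos (Real.pi/u)
  have hchu : Real.cosh (Real.pi*u) ≤ K := by
    refine le_trans (cosh_mono_aux (mul_nonneg hpi.le hu0.le)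
      (mul_nonneg hpi.le (by linarith)) (by nlinarith)) hKc
  have hch1 : (1:ℝ) ≤ Real.cosh (Real.pi*u) := Real.one_le_cosh _
  have hsh0 : 0 ≤ Real.sinh (Real.pi*u) := by
    rw [Real.sinh_nonneg_iff]; exact mul_nonneg hpi.le hu0.le
  have hu4b : u^4 ≤ b^4 := pow_le_pow_left₀ hu0.le hu2 4
  have ha4 : a^4 ≤ u^4 := pow_le_pow_left₀ (by linarith) hu1 4
  have ha8 : a^8 ≤ u^8 := pow_le_pow_left₀ (by linarith) hu1 8
  have hu41 : u^4 ≤ (7/10:ℝ)^4 := by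
    calc u^4 ≤ b^4 := hu4b
    _ ≤ (7/10:ℝ)^4 := pow_le_pow_left₀ (by linarith) hb 4
  have hu40 : 0 ≤ u^4 := by positivity
  have hXnn : 0 ≤ u^4*(1-u^4)*Real.cosh (Real.pi*u) := by
    apply mul_nonneg (mul_nonneg hu40 (by nlinarith)) (by linarith)
  have ht1 : u^4*(1-u^4)*Real.cosh (Real.pi*u) * Real.cos (Real.pi/u)
      ≥ -(u^4*(1-u^4)*Real.cosh (Real.pi*u)) := by
    nlinarith [mul_nonneg hXnn (by linarith : (0:ℝ) ≤ 1 + Real.cos (Real.pi/u))]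
  have hXle : u^4*(1-u^4)*Real.cosh (Real.pi*u) ≤ (1-u^4)*(b^4*K) := by
    have h1 : u^4*Real.cosh (Real.pi*u) ≤ b^4*K :=
      mul_le_mul hu4b hchu (by linarith) (by positivity)
    have h2 : 0 ≤ 1 - u^4 := by nlinarith
    nlinarith [mul_le_mul_of_nonneg_left h1 h2]
  have ht2 : 0 ≤ -(2*u^6*Real.sinh (Real.pi*u) * Real.sin (Real.pi/u)) := by
    have := mul_nonneg (mul_nonneg (by positivity : (0:ℝ) ≤ 2*u^6) hsh0)
      (neg_nonneg.2 hsinle)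
    nlinarith
  have hfin : 0 < (1-u^4)*(1+a^4+a^8-b^4*K) :=
    mul_pos (by nlinarith) (by linarith)
  unfold g
  nlinarith [ht1, hXle, ht2, hfin, ha4, ha8]

lemma caseB2 (Ch Sh : ℝ) (hCh0 : 0 ≤ Ch) (hCh : Real.cosh (Real.pi*(19/25)) ≤ Ch)
    (hSh0 : 0 ≤ Sh) (hSh : Sh ≤ Real.sinh (Real.pi*(7/10)))
    (hK : (19/25:ℝ)^4*(1-(7/10:ℝ)^4)*Ch < 2*(7/10:ℝ)^6*Sh*(8/10) + 1 - (19/25:ℝ)^12)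
    (u : ℝ) (hu1 : 7/10 ≤ u) (hu2 : u ≤ 19/25) : 0 < g u Real.pi := by
  have hpil : (3.141592:ℝ) < Real.pi := Real.pi_gt_d6
  have hpiu : Real.pi < 3.141593 := Real.pi_lt_d6
  have hpi : (0:ℝ) < Real.pi := Real.pi_pos
  have hu0 : (0:ℝ) < u := by linarith
  obtain ⟨φ, hφdef⟩ : ∃ φ : ℝ, φ = Real.pi/u - Real.pi := ⟨_, rfl⟩
  have hπu : Real.pi/u = Real.pi + φ := by rw [hφdef]; ring
  have hφ_eq : φ = Real.pi*(1-u)/u := by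
    rw [hφdef]; field_simp
  have hφ0 : 0 ≤ φ := by
    rw [hφ_eq]
    apply div_nonneg (mul_nonneg hpi.le (by linarith)) hu0.le
  have hphiu : φ * u = Real.pi * (1-u) := by
    rw [hφ_eq]; field_simp
  have hql : (992081/1000000:ℝ) ≤ φ := by
    nlinarith [mul_nonneg hφ0 (by linarith : (0:ℝ) ≤ 19/25 - u),
      mul_nonneg (by linarith : (0:ℝ) ≤ Real.pi - 3141592/1000000)
        (by linarith : (0:ℝ) ≤ 1 - u)]
  have hqu : φ ≤ (1346397/1000000:ℝ) := by
    nlinarith [mul_nonneg hφ0 (by linarith : (0:ℝ) ≤ u - 7/10),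
      mul_nonneg (by linarith : (0:ℝ) ≤ 3141593/1000000 - Real.pi)
        (by linarith : (0:ℝ) ≤ 1 - u)]
  have hcos : Real.cos (Real.pi/u) = -Real.cos φ := by
    rw [hπu, Real.cos_add]; simp
  have hsin : Real.sin (Real.pi/u) = -Real.sin φ := by
    rw [hπu, Real.sin_add]; simp
  have hcosU : Real.cos φ ≤ 1 := Real.cos_le_one φ
  have hcosL : 0 ≤ Real.cos φ := by
    apply Real.cos_nonneg_of_mem_Icc
    constructor <;> [linarith; linarith]
  have hsinφ : (4/5:ℝ) ≤ Real.sin φ := by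
    obtain ⟨y, hydef⟩ : ∃ y : ℝ, y = Real.pi/2 - φ := ⟨_, rfl⟩
    have hyeq : Real.sin φ = Real.cos y := by
      rw [hydef]; exact (Real.cos_pi_div_two_sub φ).symm
    have hy0 : 0 ≤ y := by rw [hydef]; linarith
    have hy1 : y ≤ 579/1000 := by rw [hydef]; linarith
    have hcb := abs_le.1 (Real.cos_bound (x := y)
      (by rw [abs_of_nonneg hy0]; linarith))
    rw [abs_of_nonneg hy0] at hcb
    have hy2 : y^2 ≤ (579/1000:ℝ)^2 := pow_le_pow_left₀ hy0 hy1 2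
    have hy4 : y^4 ≤ (579/1000:ℝ)^4 := pow_le_pow_left₀ hy0 hy1 4
    rw [hyeq]
    nlinarith [hcb.1]
  have hchu : Real.cosh (Real.pi*u) ≤ Ch :=
    le_trans (cosh_mono_aux (mul_nonneg hpi.le hu0.le)
      (mul_nonneg hpi.le (by norm_num)) (by nlinarith)) hCh
  have hshu : Sh ≤ Real.sinh (Real.pi*u) := by
    refine le_trans hSh ?_
    rw [Real.sinh_le_sinh]; nlinarith
  have hshnn : 0 ≤ Real.sinh (Real.pi*u) := le_trans hSh0 hshu
  have hchnn : (0:ℝ) ≤ Real.cosh (Real.pi*u) := (Real.cosh_pos (Real.pi*u)).le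
  have hu4 : u^4 ≤ (19/25:ℝ)^4 := pow_le_pow_left₀ hu0.le hu2 4
  have hu4l : (7/10:ℝ)^4 ≤ u^4 := pow_le_pow_left₀ (by norm_num) hu1 4
  have hu6 : (7/10:ℝ)^6 ≤ u^6 := pow_le_pow_left₀ (by norm_num) hu1 6
  have hu12 : u^12 ≤ (19/25:ℝ)^12 := pow_le_pow_left₀ hu0.le hu2 12
  have hA : u^4*(1-u^4)*Real.cosh (Real.pi*u)*Real.cos φ
      ≤ (19/25:ℝ)^4*(1-(7/10:ℝ)^4)*Ch := by
    have t1 : u^4*(1-u^4) ≤ (19/25:ℝ)^4*(1-(7/10:ℝ)^4) :=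
      mul_le_mul hu4 (by linarith) (by nlinarith) (by norm_num)
    have t2 : u^4*(1-u^4)*Real.cosh (Real.pi*u) ≤ (19/25:ℝ)^4*(1-(7/10:ℝ)^4)*Ch :=
      mul_le_mul t1 hchu hchnn (by norm_num)
    nlinarith [mul_le_mul_of_nonneg_left hcosU
      (mul_nonneg (mul_nonneg (by positivity : (0:ℝ) ≤ u^4)
        (by nlinarith : (0:ℝ) ≤ 1-u^4)) hchnn)]
  have hB : 2*(7/10:ℝ)^6*Sh*(8/10) ≤ 2*u^6*Real.sinh (Real.pi*u)*Real.sin φ := by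
    have t1 : 2*(7/10:ℝ)^6*Sh ≤ 2*u^6*Real.sinh (Real.pi*u) := by
      nlinarith [mul_le_mul hu6 hshu hSh0 (by positivity : (0:ℝ) ≤ u^6)]
    exact mul_le_mul t1 (by linarith) (by norm_num)
      (mul_nonneg (by positivity) hshnn)
  unfold g
  rw [hcos, hsin]
  nlinarith [hA, hB, hu12]

lemma caseC (a b Ch Sh Cp Sc : ℝ)
    (ha : 19/25 ≤ a) (hab : a ≤ b) (hb1 : b ≤ 1)
    (hCh0 : 0 ≤ Ch) (hCh : Real.cosh (Real.pi * b) ≤ Ch)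
    (hSh0 : 0 ≤ Sh) (hSh : Sh ≤ Real.sinh (Real.pi * a))
    (hCp : 1 - (3141592/1000000*(1-b)/b)^2/2 + 5*(3141593/1000000*(1-a)/a)^4/96 ≤ Cp)
    (hSc0 : 0 ≤ Sc)
    (hSc : Sc ≤ 1 - (3141593/1000000*(1-a)/a)^2/6 - 5*(3141593/1000000*(1-a)/a)^3/96)
    (hK : 0 < -(b^4*(1+b+b^2+b^3))*Ch*Cp + 2*a^6*Sh*(3141592/1000000)*Sc + 12*a^11)
    (u : ℝ) (hu1 : a ≤ u) (hu2 : u ≤ b) (hu3 : u < 1) : 0 < g u Real.pi := by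
  have hpil : (3.141592:ℝ) < Real.pi := Real.pi_gt_d6
  have hpiu : Real.pi < 3.141593 := Real.pi_lt_d6
  have hpi : (0:ℝ) < Real.pi := Real.pi_pos
  have hu0 : (0:ℝ) < u := by linarith
  have hb0 : (0:ℝ) < b := by linarith
  have ha0 : (0:ℝ) < a := by linarith
  have ht : (0:ℝ) < 1 - u := by linarith
  obtain ⟨φ, hφdef⟩ : ∃ φ : ℝ, φ = Real.pi/u - Real.pi := ⟨_, rfl⟩
  have hπu : Real.pi/u = Real.pi + φ := by rw [hφdef]; ring
  have hφ_eq : φ = Real.pi*(1-u)/u := by rw [hφdef]; field_simp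
  have hφ0 : 0 ≤ φ := by
    rw [hφ_eq]; apply div_nonneg (mul_nonneg hpi.le (by linarith)) hu0.le
  have hphiu : φ * u = Real.pi * (1-u) := by rw [hφ_eq]; field_simp
  obtain ⟨qm, hqmdef⟩ : ∃ q : ℝ, q = 3141592/1000000*(1-b)/b := ⟨_, rfl⟩
  obtain ⟨qp, hqpdef⟩ : ∃ q : ℝ, q = 3141593/1000000*(1-a)/a := ⟨_, rfl⟩
  rw [← hqmdef] at hCp
  rw [← hqpdef] at hCp hSc
  have hqm0 : 0 ≤ qm := by
    rw [hqmdef]; apply div_nonneg (by linarith) hb0.le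
  have hqp0 : 0 ≤ qp := by
    rw [hqpdef]; apply div_nonneg (by linarith) ha0.le
  have hql : qm ≤ φ := by
    rw [hqmdef, hφ_eq, div_le_div_iff₀ hb0 hu0]
    linarith [mul_nonneg (mul_nonneg (by linarith : (0:ℝ) ≤ Real.pi - 3141592/1000000)
      (by linarith : (0:ℝ) ≤ 1 - u)) hb0.le]
  have hqu : φ ≤ qp := by
    rw [hqpdef, hφ_eq, div_le_div_iff₀ hu0 ha0]
    linarith [mul_nonneg (mul_nonneg (by linarith : (0:ℝ) ≤ 3141593/1000000 - Real.pi)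
      (by linarith : (0:ℝ) ≤ 1 - u)) ha0.le]
  have hqp1 : qp ≤ 1 := by
    rw [hqpdef, div_le_one ha0]; linarith
  have hφ1 : φ ≤ 1 := le_trans hqu hqp1
  have hcos : Real.cos (Real.pi/u) = -Real.cos φ := by
    rw [hπu, Real.cos_add]; simp
  have hsin : Real.sin (Real.pi/u) = -Real.sin φ := by
    rw [hπu, Real.sin_add]; simp
  have habs : |φ| ≤ 1 := by rw [abs_of_nonneg hφ0]; exact hφ1
  have hcb := abs_le.1 (Real.cos_bound habs)
  rw [abs_of_nonneg hφ0] at hcb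
  have hsb := abs_le.1 (Real.sin_bound habs)
  rw [abs_of_nonneg hφ0] at hsb
  have hφ2 : φ^2 ≤ 1 := pow_le_one₀ hφ0 hφ1
  have hφ4 : φ^4 ≤ 1 := pow_le_one₀ hφ0 hφ1
  have hqm1 : qm ≤ 1 := le_trans hql hφ1
  have hqm21 : qm^2 ≤ 1 := pow_le_one₀ hqm0 hqm1
  have hqm2 : qm^2 ≤ φ^2 := pow_le_pow_left₀ hqm0 hql 2
  have hqp4 : φ^4 ≤ qp^4 := pow_le_pow_left₀ hφ0 hqu 4
  have hqp2 : φ^2 ≤ qp^2 := pow_le_pow_left₀ hφ0 hqu 2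
  have hqp3 : φ^3 ≤ qp^3 := pow_le_pow_left₀ hφ0 hqu 3
  have hqp40 : (0:ℝ) ≤ qp^4 := by positivity
  have hcosU : Real.cos φ ≤ Cp := by linarith [hcb.2]
  have hcosL : 0 ≤ Real.cos φ := by linarith [hcb.1]
  have hCp0 : 0 ≤ Cp := by linarith
  have hsinL : 3141592/1000000*(1-u)*Sc ≤ Real.sin φ := by
    have s3 : Sc ≤ 1 - φ^2/6 - φ^3*(5/96) := by linarith
    have s4 : φ*Sc ≤ φ*(1 - φ^2/6 - φ^3*(5/96)) := mul_le_mul_of_nonneg_left s3 hφ0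
    have s5 : 3141592/1000000*(1-u) ≤ φ := by
      linarith [mul_nonneg hφ0 ht.le,
        mul_nonneg (by linarith : (0:ℝ) ≤ Real.pi - 3141592/1000000)
          (by linarith : (0:ℝ) ≤ 1 - u)]
    have s6 : 3141592/1000000*(1-u)*Sc ≤ φ*Sc := mul_le_mul_of_nonneg_right s5 hSc0
    linarith [hsb.1, s4, s6, mul_le_mul_of_nonneg_left hφ1 (pow_nonneg hφ0 4)]
  have hsin0 : 0 ≤ Real.sin φ := by
    refine le_trans ?_ hsinL
    exact mul_nonneg (mul_nonneg (by norm_num) ht.le) hSc0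
  have hchu : Real.cosh (Real.pi*u) ≤ Ch :=
    le_trans (cosh_mono_aux (mul_nonneg hpi.le hu0.le)
      (mul_nonneg hpi.le hb0.le)
      (by linarith [mul_nonneg hpi.le (by linarith : (0:ℝ) ≤ b - u)])) hCh
  have hshu : Sh ≤ Real.sinh (Real.pi*u) := by
    refine le_trans hSh ?_
    rw [Real.sinh_le_sinh]
    linarith [mul_nonneg hpi.le (by linarith : (0:ℝ) ≤ u - a)]
  have hshnn : 0 ≤ Real.sinh (Real.pi*u) := le_trans hSh0 hshu
  have hchnn : (0:ℝ) ≤ Real.cosh (Real.pi*u) := (Real.cosh_pos (Real.pi*u)).le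
  have hA : u^4*(1-u^4)*Real.cosh (Real.pi*u)*Real.cos φ
      ≤ (1-u)*((b^4*(1+b+b^2+b^3))*(Ch*Cp)) := by
    have e1 : u^4*(1-u^4)*Real.cosh (Real.pi*u)*Real.cos φ
        = (1-u)*((u^4*(1+u+u^2+u^3))*(Real.cosh (Real.pi*u)*Real.cos φ)) := by ring
    rw [e1]
    have p1 : u^4*(1+u+u^2+u^3) ≤ b^4*(1+b+b^2+b^3) := by
      have e4 := pow_le_pow_left₀ hu0.le hu2 4
      have e5 := pow_le_pow_left₀ hu0.le hu2 5
      have e6 := pow_le_pow_left₀ hu0.le hu2 6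
      have e7 := pow_le_pow_left₀ hu0.le hu2 7
      have l1 : u^4*(1+u+u^2+u^3) = u^4+u^5+u^6+u^7 := by ring
      have l2 : b^4*(1+b+b^2+b^3) = b^4+b^5+b^6+b^7 := by ring
      rw [l1, l2]; linarith
    have p2 : Real.cosh (Real.pi*u)*Real.cos φ ≤ Ch*Cp :=
      mul_le_mul hchu hcosU hcosL hCh0
    have p1nn : (0:ℝ) ≤ u^4*(1+u+u^2+u^3) := by positivity
    apply mul_le_mul_of_nonneg_left _ ht.le
    exact mul_le_mul p1 p2 (mul_nonneg hchnn hcosL) (le_trans p1nn p1)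
  have hB : 2*a^6*Sh*(3141592/1000000*(1-u)*Sc)
      ≤ 2*u^6*Real.sinh (Real.pi*u)*Real.sin φ := by
    have t1 : 2*a^6*Sh ≤ 2*u^6*Real.sinh (Real.pi*u) := by
      linarith [mul_le_mul (pow_le_pow_left₀ ha0.le hu1 6) hshu hSh0
        (by positivity : (0:ℝ) ≤ u^6)]
    apply mul_le_mul t1 hsinL
      (mul_nonneg (mul_nonneg (by norm_num) ht.le) hSc0)
      (mul_nonneg (by positivity) hshnn)
  have hC : 12*a^11*(1-u) ≤ 1 - u^12 := by
    have h11 : a^11 ≤ u^11 := pow_le_pow_left₀ ha0.le hu1 11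
    have h0 : u^11 ≤ 1 := pow_le_one₀ hu0.le hu3.le
    have hk1 : u^11 ≤ u^1 := pow_le_pow_of_le_one hu0.le hu3.le (by norm_num)
    have hk2 : u^11 ≤ u^2 := pow_le_pow_of_le_one hu0.le hu3.le (by norm_num)
    have hk3 : u^11 ≤ u^3 := pow_le_pow_of_le_one hu0.le hu3.le (by norm_num)
    have hk4 : u^11 ≤ u^4 := pow_le_pow_of_le_one hu0.le hu3.le (by norm_num)
    have hk5 : u^11 ≤ u^5 := pow_le_pow_of_le_one hu0.le hu3.le (by norm_num)
    have hk6 : u^11 ≤ u^6 := pow_le_pow_of_le_one hu0.le hu3.le (by norm_num)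
    have hk7 : u^11 ≤ u^7 := pow_le_pow_of_le_one hu0.le hu3.le (by norm_num)
    have hk8 : u^11 ≤ u^8 := pow_le_pow_of_le_one hu0.le hu3.le (by norm_num)
    have hk9 : u^11 ≤ u^9 := pow_le_pow_of_le_one hu0.le hu3.le (by norm_num)
    have hk10 : u^11 ≤ u^10 := pow_le_pow_of_le_one hu0.le hu3.le (by norm_num)
    have e1 : (1-u)*(1+u^1+u^2+u^3+u^4+u^5+u^6+u^7+u^8+u^9+u^10+u^11) = 1 - u^12 := by
      ring
    have key : (1-u)*(12*u^11)
        ≤ (1-u)*(1+u^1+u^2+u^3+u^4+u^5+u^6+u^7+u^8+u^9+u^10+u^11) := by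
      apply mul_le_mul_of_nonneg_left _ ht.le
      linarith
    have h2 : (1-u)*(12*a^11) ≤ (1-u)*(12*u^11) :=
      mul_le_mul_of_nonneg_left (by linarith) ht.le
    linarith [key, h2, e1]
  have hKt : 0 < (1-u)*(-(b^4*(1+b+b^2+b^3))*Ch*Cp
      + 2*a^6*Sh*(3141592/1000000)*Sc + 12*a^11) := mul_pos ht hK
  unfold g
  rw [hcos, hsin]
  linarith [hA, hB, hC, hKt]

lemma coshU_half : Real.cosh (Real.pi*(1/2)) ≤ (2509181/1000000 : ℝ) := by
  have hpiu : Real.pi < 3.141593 := Real.pi_lt_d6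
  have hpil : (3.141592:ℝ) < Real.pi := Real.pi_gt_d6
  have hE : Real.exp (Real.pi*(1/2)) ≤ (60131/12500 : ℝ) :=
    exp_ub (q := (245437/625000)) (by norm_num) (by norm_num) (by linarith) (by norm_num)
  have hF : (4810467/1000000 : ℝ) ≤ Real.exp (Real.pi*(1/2)) :=
    exp_lb (q := (392699/1000000)) (by norm_num) (by norm_num) (by linarith) (by norm_num)
  exact cosh_ub hE (by norm_num) hF (by norm_num)

lemma coshU_b62 : Real.cosh (Real.pi*(31/50)) ≤ (894469/250000 : ℝ) := by
  have hpiu : Real.pi < 3.141593 := Real.pi_lt_d6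
  have hpil : (3.141592:ℝ) < Real.pi := Real.pi_gt_d6
  have hE : Real.exp (Real.pi*(31/50)) ≤ (175329/25000 : ℝ) :=
    exp_ub (q := (486947/1000000)) (by norm_num) (by norm_num) (by linarith) (by norm_num)
  have hF : (7013099/1000000 : ℝ) ≤ Real.exp (Real.pi*(31/50)) :=
    exp_lb (q := (4869467/10000000)) (by norm_num) (by norm_num) (by linarith) (by norm_num)
  exact cosh_ub hE (by norm_num) hF (by norm_num)

lemma coshU_b70 : Real.cosh (Real.pi*(7/10)) ≤ (4563971/1000000 : ℝ) := by
  have hpiu : Real.pi < 3.141593 := Real.pi_lt_d6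
  have hpil : (3.141592:ℝ) < Real.pi := Real.pi_gt_d6
  have hE : Real.exp (Real.pi*(7/10)) ≤ (9017037/1000000 : ℝ) :=
    exp_ub (q := (1374447/2500000)) (by norm_num) (by norm_num) (by linarith) (by norm_num)
  have hF : (1803377/200000 : ℝ) ≤ Real.exp (Real.pi*(7/10)) :=
    exp_lb (q := (2748893/5000000)) (by norm_num) (by norm_num) (by linarith) (by norm_num)
  exact cosh_ub hE (by norm_num) hF (by norm_num)

lemma coshU_a760 : Real.cosh (Real.pi*(19/25)) ≤ (686207/125000 : ℝ) := by
  have hpiu : Real.pi < 3.141593 := Real.pi_lt_d6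
  have hpil : (3.141592:ℝ) < Real.pi := Real.pi_gt_d6
  have hE : Real.exp (Real.pi*(19/25)) ≤ (10887459/1000000 : ℝ) :=
    exp_ub (q := (5969027/10000000)) (by norm_num) (by norm_num) (by linarith) (by norm_num)
  have hF : (680447/62500 : ℝ) ≤ Real.exp (Real.pi*(19/25)) :=
    exp_lb (q := (46633/78125)) (by norm_num) (by norm_num) (by linarith) (by norm_num)
  exact cosh_ub hE (by norm_num) hF (by norm_num)

lemma coshU_a765 : Real.cosh (Real.pi*(153/200)) ≤ (44601/8000 : ℝ) := by
  have hpiu : Real.pi < 3.141593 := Real.pi_lt_d6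
  have hpil : (3.141592:ℝ) < Real.pi := Real.pi_gt_d6
  have hE : Real.exp (Real.pi*(153/200)) ≤ (1105983/100000 : ℝ) :=
    exp_ub (q := (6008297/10000000)) (by norm_num) (by norm_num) (by linarith) (by norm_num)
  have hF : (2211901/200000 : ℝ) ≤ Real.exp (Real.pi*(153/200)) :=
    exp_lb (q := (3004147/5000000)) (by norm_num) (by norm_num) (by linarith) (by norm_num)
  exact cosh_ub hE (by norm_num) hF (by norm_num)

lemma coshU_a800 : Real.cosh (Real.pi*(4/5)) ≤ (6213153/1000000 : ℝ) := by
  have hpiu : Real.pi < 3.141593 := Real.pi_lt_d6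
  have hpil : (3.141592:ℝ) < Real.pi := Real.pi_gt_d6
  have hE : Real.exp (Real.pi*(4/5)) ≤ (123453/10000 : ℝ) :=
    exp_ub (q := (3141593/5000000)) (by norm_num) (by norm_num) (by linarith) (by norm_num)
  have hF : (12344827/1000000 : ℝ) ≤ Real.exp (Real.pi*(4/5)) :=
    exp_lb (q := (392699/625000)) (by norm_num) (by norm_num) (by linarith) (by norm_num)
  exact cosh_ub hE (by norm_num) hF (by norm_num)

lemma coshU_a840 : Real.cosh (Real.pi*(21/25)) ≤ (7034897/1000000 : ℝ) := by
  have hpiu : Real.pi < 3.141593 := Real.pi_lt_d6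
  have hpil : (3.141592:ℝ) < Real.pi := Real.pi_gt_d6
  have hE : Real.exp (Real.pi*(21/25)) ≤ (874897/62500 : ℝ) :=
    exp_ub (q := (3298673/5000000)) (by norm_num) (by norm_num) (by linarith) (by norm_num)
  have hF : (699881/50000 : ℝ) ≤ Real.exp (Real.pi*(21/25)) :=
    exp_lb (q := (6597343/10000000)) (by norm_num) (by norm_num) (by linarith) (by norm_num)
  exact cosh_ub hE (by norm_num) hF (by norm_num)

lemma coshU_a880 : Real.cosh (Real.pi*(22/25)) ≤ (1991969/250000 : ℝ) := by
  have hpiu : Real.pi < 3.141593 := Real.pi_lt_d6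
  have hpil : (3.141592:ℝ) < Real.pi := Real.pi_gt_d6
  have hE : Real.exp (Real.pi*(22/25)) ≤ (3174549/200000 : ℝ) :=
    exp_ub (q := (1382301/2000000)) (by norm_num) (by norm_num) (by linarith) (by norm_num)
  have hF : (15871639/1000000 : ℝ) ≤ Real.exp (Real.pi*(22/25)) :=
    exp_lb (q := (3455751/5000000)) (by norm_num) (by norm_num) (by linarith) (by norm_num)
  exact cosh_ub hE (by norm_num) hF (by norm_num)

lemma coshU_a915 : Real.cosh (Real.pi*(183/200)) ≤ (8887031/1000000 : ℝ) := by
  have hpiu : Real.pi < 3.141593 := Real.pi_lt_d6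
  have hpil : (3.141592:ℝ) < Real.pi := Real.pi_gt_d6
  have hE : Real.exp (Real.pi*(183/200)) ≤ (3543523/200000 : ℝ) :=
    exp_ub (q := (3593197/5000000)) (by norm_num) (by norm_num) (by linarith) (by norm_num)
  have hF : (8858021/500000 : ℝ) ≤ Real.exp (Real.pi*(183/200)) :=
    exp_lb (q := (7186391/10000000)) (by norm_num) (by norm_num) (by linarith) (by norm_num)
  exact cosh_ub hE (by norm_num) hF (by norm_num)

lemma coshU_a945 : Real.cosh (Real.pi*(189/200)) ≤ (9760031/1000000 : ℝ) := by
  have hpiu : Real.pi < 3.141593 := Real.pi_lt_d6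
  have hpil : (3.141592:ℝ) < Real.pi := Real.pi_gt_d6
  have hE : Real.exp (Real.pi*(189/200)) ≤ (19468691/1000000 : ℝ) :=
    exp_ub (q := (3711007/5000000)) (by norm_num) (by norm_num) (by linarith) (by norm_num)
  have hF : (19466581/1000000 : ℝ) ≤ Real.exp (Real.pi*(189/200)) :=
    exp_lb (q := (7422011/10000000)) (by norm_num) (by norm_num) (by linarith) (by norm_num)
  exact cosh_ub hE (by norm_num) hF (by norm_num)

lemma coshU_one : Real.cosh (Real.pi*(1)) ≤ (11591991/1000000 : ℝ) := by
  have hpiu : Real.pi < 3.141593 := Real.pi_lt_d6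
  have hpil : (3.141592:ℝ) < Real.pi := Real.pi_gt_d6
  have hE : Real.exp (Real.pi*(1)) ≤ (578519/25000 : ℝ) :=
    exp_ub (q := (7853983/10000000)) (by norm_num) (by norm_num) (by linarith) (by norm_num)
  have hF : (5784301/250000 : ℝ) ≤ Real.exp (Real.pi*(1)) :=
    exp_lb (q := (392699/500000)) (by norm_num) (by norm_num) (by linarith) (by norm_num)
  exact cosh_ub hE (by norm_num) hF (by norm_num)

lemma sinhL_a700 : (445299/100000 : ℝ) ≤ Real.sinh (Real.pi*(7/10)) := by
  have hpiu : Real.pi < 3.141593 := Real.pi_lt_d6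
  have hpil : (3.141592:ℝ) < Real.pi := Real.pi_gt_d6
  have hF : (1803377/200000 : ℝ) ≤ Real.exp (Real.pi*(7/10)) :=
    exp_lb (q := (2748893/5000000)) (by norm_num) (by norm_num) (by linarith) (by norm_num)
  exact sinh_lb (by norm_num) hF (by norm_num)

lemma sinhL_a760 : (107953/20000 : ℝ) ≤ Real.sinh (Real.pi*(19/25)) := by
  have hpiu : Real.pi < 3.141593 := Real.pi_lt_d6
  have hpil : (3.141592:ℝ) < Real.pi := Real.pi_gt_d6
  have hF : (680447/62500 : ℝ) ≤ Real.exp (Real.pi*(19/25)) :=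
    exp_lb (q := (46633/78125)) (by norm_num) (by norm_num) (by linarith) (by norm_num)
  exact sinh_lb (by norm_num) hF (by norm_num)

lemma sinhL_a765 : (2742271/500000 : ℝ) ≤ Real.sinh (Real.pi*(153/200)) := by
  have hpiu : Real.pi < 3.141593 := Real.pi_lt_d6
  have hpil : (3.141592:ℝ) < Real.pi := Real.pi_gt_d6
  have hF : (2211901/200000 : ℝ) ≤ Real.exp (Real.pi*(153/200)) :=
    exp_lb (q := (3004147/5000000)) (by norm_num) (by norm_num) (by linarith) (by norm_num)
  exact sinh_lb (by norm_num) hF (by norm_num)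

lemma sinhL_a800 : (613191/100000 : ℝ) ≤ Real.sinh (Real.pi*(4/5)) := by
  have hpiu : Real.pi < 3.141593 := Real.pi_lt_d6
  have hpil : (3.141592:ℝ) < Real.pi := Real.pi_gt_d6
  have hF : (12344827/1000000 : ℝ) ≤ Real.exp (Real.pi*(4/5)) :=
    exp_lb (q := (392699/625000)) (by norm_num) (by norm_num) (by linarith) (by norm_num)
  exact sinh_lb (by norm_num) hF (by norm_num)

lemma sinhL_a840 : (6963089/1000000 : ℝ) ≤ Real.sinh (Real.pi*(21/25)) := by
  have hpiu : Real.pi < 3.141593 := Real.pi_lt_d6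
  have hpil : (3.141592:ℝ) < Real.pi := Real.pi_gt_d6
  have hF : (699881/50000 : ℝ) ≤ Real.exp (Real.pi*(21/25)) :=
    exp_lb (q := (6597343/10000000)) (by norm_num) (by norm_num) (by linarith) (by norm_num)
  exact sinh_lb (by norm_num) hF (by norm_num)

lemma sinhL_a880 : (1976079/250000 : ℝ) ≤ Real.sinh (Real.pi*(22/25)) := by
  have hpiu : Real.pi < 3.141593 := Real.pi_lt_d6
  have hpil : (3.141592:ℝ) < Real.pi := Real.pi_gt_d6
  have hF : (15871639/1000000 : ℝ) ≤ Real.exp (Real.pi*(22/25)) :=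
    exp_lb (q := (3455751/5000000)) (by norm_num) (by norm_num) (by linarith) (by norm_num)
  exact sinh_lb (by norm_num) hF (by norm_num)

lemma sinhL_a915 : (8829797/1000000 : ℝ) ≤ Real.sinh (Real.pi*(183/200)) := by
  have hpiu : Real.pi < 3.141593 := Real.pi_lt_d6
  have hpil : (3.141592:ℝ) < Real.pi := Real.pi_gt_d6
  have hF : (8858021/500000 : ℝ) ≤ Real.exp (Real.pi*(183/200)) :=
    exp_lb (q := (7186391/10000000)) (by norm_num) (by norm_num) (by linarith) (by norm_num)
  exact sinh_lb (by norm_num) hF (by norm_num)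

lemma sinhL_a945 : (1941521/200000 : ℝ) ≤ Real.sinh (Real.pi*(189/200)) := by
  have hpiu : Real.pi < 3.141593 := Real.pi_lt_d6
  have hpil : (3.141592:ℝ) < Real.pi := Real.pi_gt_d6
  have hF : (19466581/1000000 : ℝ) ≤ Real.exp (Real.pi*(189/200)) :=
    exp_lb (q := (7422011/10000000)) (by norm_num) (by norm_num) (by linarith) (by norm_num)
  exact sinh_lb (by norm_num) hF (by norm_num)

theorem stmt_18 (u : ℝ) (hu0 : 0 ≤ u) (hu1 : u < 1) : 0 < g u Real.pi := by
  rcases le_or_gt u (1/2) with h0 | h0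
  · exact caseA _ (by norm_num) coshU_half (by norm_num) u hu0 h0
  rcases le_or_gt u (31/50) with h1 | h1
  · exact caseB (1/2) (31/50) _ (by norm_num) (by norm_num) (by norm_num)
      (by norm_num) coshU_b62 (by norm_num) u h0.le h1
  rcases le_or_gt u (7/10) with h2 | h2
  · exact caseB (31/50) (7/10) _ (by norm_num) (by norm_num) (by norm_num)
      (by norm_num) coshU_b70 (by norm_num) u h1.le h2
  rcases le_or_gt u (19/25) with h3 | h3
  · exact caseB2 _ _ (by norm_num) coshU_a760 (by norm_num) sinhL_a700 (by norm_num)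
      u h2.le h3
  rcases le_or_gt u (153/200) with h4 | h4
  · exact caseC (19/25) (153/200) _ _ (584779/1000000) (392553/500000)
      (by norm_num) (by norm_num) (by norm_num) (by norm_num) coshU_a765
      (by norm_num) sinhL_a760 (by norm_num) (by norm_num) (by norm_num) (by norm_num)
      u h3.le h4 hu1
  rcases le_or_gt u (4/5) with h5 | h5
  · exact caseC (153/200) (4/5) _ _ (736753/1000000) (797961/1000000)
      (by norm_num) (by norm_num) (by norm_num) (by norm_num) coshU_a800
      (by norm_num) sinhL_a765 (by norm_num) (by norm_num) (by norm_num) (by norm_num)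
      u h4.le h5 hu1
  rcases le_or_gt u (21/25) with h6 | h6
  · exact caseC (4/5) (21/25) _ _ (420389/500000) (435979/500000)
      (by norm_num) (by norm_num) (by norm_num) (by norm_num) coshU_a840
      (by norm_num) sinhL_a800 (by norm_num) (by norm_num) (by norm_num) (by norm_num)
      u h5.le h6 hu1
  rcases le_or_gt u (22/25) with h7 | h7
  · exact caseC (21/25) (22/25) _ _ (228729/250000) (929159/1000000)
      (by norm_num) (by norm_num) (by norm_num) (by norm_num) coshU_a880
      (by norm_num) sinhL_a840 (by norm_num) (by norm_num) (by norm_num) (by norm_num)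
      u h6.le h7 hu1
  rcases le_or_gt u (183/200) with h8 | h8
  · exact caseC (22/25) (183/200) _ _ (959169/1000000) (965317/1000000)
      (by norm_num) (by norm_num) (by norm_num) (by norm_num) coshU_a915
      (by norm_num) sinhL_a880 (by norm_num) (by norm_num) (by norm_num) (by norm_num)
      u h7.le h8 hu1
  rcases le_or_gt u (189/200) with h9 | h9
  · exact caseC (183/200) (189/200) _ _ (491831/500000) (98451/100000)
      (by norm_num) (by norm_num) (by norm_num) (by norm_num) coshU_a945
      (by norm_num) sinhL_a915 (by norm_num) (by norm_num) (by norm_num) (by norm_num)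
      u h8.le h9 hu1
  exact caseC (189/200) (1) _ _ (1000059/1000000) (994109/1000000)
      (by norm_num) (by norm_num) (by norm_num) (by norm_num) coshU_one
      (by norm_num) sinhL_a945 (by norm_num) (by norm_num) (by norm_num) (by norm_num)
      u h9.le hu1.le hu1
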